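/- Suppose α : Γ → Aut(A) is an action of the group Γ by automorphisms of A. Define φ : B_Γ → M(ℓ∞(Γ, A)) by φ(f)(x) = f(x)·1_{M(A)} and ψ : A → M(ℓ∞(Γ, A)) by ψ(a)(x) = α_x(a) (viewing ℓ∞(Γ, M(A)) ⊆ M(ℓ∞(Γ, A))). Then φ and ψ are *-homomorphisms with commuting ranges, and the induced homomorphism δ = φ ⊗ ψ on B_Γ ⊗ A satisfies δ(1_x ⊗ a) = μ_x(α_x(a)) for all x ∈ Γ, a ∈ A. -/

import Mathlib

open scoped ENNReal

variable {Γ : Type*} [AddCommGroup Γ] [LinearOrder Γ] [IsOrderedAddMonoid Γ] {A : Type*} [NonUnitalCStarAlgebra A]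

/-- The map `μ_x : A → ℓ∞(Γ, A)`, `(μ_x a)(y) = α_{y-x}(a)` for `y ≥ x` and `0` otherwise. -/
noncomputable def mu (α : Γ → (A →⋆ₙₐ[ℂ] A)) (x : Γ) (a : A) :
    lp (fun _ : Γ => A) ∞ :=
  ⟨fun y => if x ≤ y then α (y - x) a else 0,
    memℓp_infty ⟨‖a‖, by
      rintro r ⟨y, rfl⟩
      dsimp only
      split_ifs
      · exact NonUnitalStarAlgHom.norm_apply_le _ _
      · simp⟩⟩

/-- The indicator function `1_s ∈ ℓ∞(Γ)` of `{t : t ≥ s}`. -/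
noncomputable def oneInd {Γ : Type*} [AddCommGroup Γ] [LinearOrder Γ] [IsOrderedAddMonoid Γ] (s : Γ) :
    lp (fun _ : Γ => ℂ) ∞ :=
  ⟨fun t => if s ≤ t then (1 : ℂ) else 0, memℓp_infty ⟨1, by
    rintro r ⟨t, rfl⟩
    dsimp only
    split_ifs <;> simp⟩⟩

/-- `B_Γ = cl span {1_s : s ∈ Γ} ⊆ ℓ∞(Γ)`. -/
noncomputable def BGamma (Γ : Type*) [AddCommGroup Γ] [LinearOrder Γ] [IsOrderedAddMonoid Γ] :
    Set (lp (fun _ : Γ => ℂ) ∞) :=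
  closure (Submodule.span ℂ {f : lp (fun _ : Γ => ℂ) ∞ | ∃ s, f = oneInd s} : Set _)

/-- `B_{Γ,∞} = cl span {1_s - 1_t : s < t} ⊆ ℓ∞(Γ)`. -/
noncomputable def BGammaInfty (Γ : Type*) [AddCommGroup Γ] [LinearOrder Γ] [IsOrderedAddMonoid Γ] :
    Set (lp (fun _ : Γ => ℂ) ∞) :=
  closure (Submodule.span ℂ
    {f : lp (fun _ : Γ => ℂ) ∞ | ∃ s t, s < t ∧ f = oneInd s - oneInd t} : Set _)

/-- `φ : B_Γ → ℓ∞(Γ, M(A))`, `φ(f)(x) = f(x)·1`, realized in `ℓ∞(Γ, A⁺)` where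
`A⁺ = Unitization ℂ A`. -/
noncomputable def PhiMul {Γ : Type*} [AddCommGroup Γ] [LinearOrder Γ] [IsOrderedAddMonoid Γ] {A : Type*}
    [NonUnitalCStarAlgebra A] (f : lp (fun _ : Γ => ℂ) ∞) :
    lp (fun _ : Γ => Unitization ℂ A) ∞ :=
  ⟨fun x => f x • (1 : Unitization ℂ A), memℓp_infty ⟨‖f‖ * ‖(1 : Unitization ℂ A)‖, by
    rintro r ⟨x, rfl⟩
    dsimp only
    rw [norm_smul]
    exact mul_le_mul_of_nonneg_right (lp.norm_apply_le_norm ENNReal.top_ne_zero f x)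
      (norm_nonneg _)⟩⟩

/-- `ψ : A → ℓ∞(Γ, M(A))`, `ψ(a)(x) = α_x(a)`, realized in `ℓ∞(Γ, A⁺)`. -/
noncomputable def PsiMul {Γ : Type*} [AddCommGroup Γ] [LinearOrder Γ] [IsOrderedAddMonoid Γ] {A : Type*}
    [NonUnitalCStarAlgebra A] (α : Γ → (A →⋆ₙₐ[ℂ] A)) (a : A) :
    lp (fun _ : Γ => Unitization ℂ A) ∞ :=
  ⟨fun x => (α x a : Unitization ℂ A), memℓp_infty ⟨‖a‖, by
    rintro r ⟨x, rfl⟩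
    dsimp only
    rw [Unitization.norm_inr]
    exact NonUnitalStarAlgHom.norm_apply_le _ _⟩⟩

/-- For a group action `α : Γ → Aut(A)`, the maps `φ` and `ψ` are *-homomorphisms with
commuting ranges, and the induced map `δ = φ ⊗ ψ` satisfies `δ(1_x ⊗ a) = μ_x(α_x(a))`. -/
theorem phi_psi_commuting_star_homs_and_delta_formula
    {Γ : Type*} [AddCommGroup Γ] [LinearOrder Γ] [IsOrderedAddMonoid Γ] {A : Type*} [NonUnitalCStarAlgebra A]
    (α : Γ → (A →⋆ₙₐ[ℂ] A))
    (hα0 : ∀ a : A, α 0 a = a)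
    (hαadd : ∀ s t : Γ, ∀ a : A, α (s + t) a = α s (α t a))
    (hbij : ∀ s : Γ, Function.Bijective (α s)) :
    (∀ f g : lp (fun _ : Γ => ℂ) ∞,
      PhiMul (A := A) (f + g) = PhiMul f + PhiMul g ∧
      PhiMul (A := A) (f * g) = PhiMul f * PhiMul g) ∧
    (∀ f : lp (fun _ : Γ => ℂ) ∞, PhiMul (A := A) (star f) = star (PhiMul f)) ∧
    (∀ a b : A, PsiMul α (a + b) = PsiMul α a + PsiMul α b ∧
      PsiMul α (a * b) = PsiMul α a * PsiMul α b) ∧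
    (∀ a : A, PsiMul α (star a) = star (PsiMul α a)) ∧
    (∀ (f : lp (fun _ : Γ => ℂ) ∞) (a : A),
      PhiMul f * PsiMul α a = PsiMul α a * PhiMul f) ∧
    (∀ (x : Γ) (a : A) (y : Γ),
      ((PhiMul (oneInd x) * PsiMul α a : lp (fun _ : Γ => Unitization ℂ A) ∞) y) = ((mu α x (α x a)) y : Unitization ℂ A)) := by
  refine ⟨fun f g => ⟨?_, ?_⟩, fun f => ?_, fun a b => ⟨?_, ?_⟩, fun a => ?_, fun f a => ?_,
    fun x a y => ?_⟩
  · apply Subtype.ext; funext y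
    simp only [lp.coeFn_add, Pi.add_apply]
    show (f + g) y • (1 : Unitization ℂ A) = f y • 1 + g y • 1
    rw [lp.coeFn_add, Pi.add_apply, add_smul]
  · apply Subtype.ext; funext y
    simp only [lp.infty_coeFn_mul, Pi.mul_apply]
    show (f * g) y • (1 : Unitization ℂ A) = (f y • 1) * (g y • 1)
    rw [lp.infty_coeFn_mul, Pi.mul_apply, smul_mul_smul_comm, one_mul]
  · apply Subtype.ext; funext y
    simp only [lp.coeFn_star, Pi.star_apply]
    show (star f) y • (1 : Unitization ℂ A) = star (f y • 1)
    rw [lp.coeFn_star, Pi.star_apply, star_smul, star_one]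
  · apply Subtype.ext; funext y
    simp only [lp.coeFn_add, Pi.add_apply]
    show ((α y (a + b) : A) : Unitization ℂ A) = (α y a : A) + (α y b : A)
    rw [map_add, Unitization.inr_add]
  · apply Subtype.ext; funext y
    simp only [lp.infty_coeFn_mul, Pi.mul_apply]
    show ((α y (a * b) : A) : Unitization ℂ A) = ((α y a : A) : Unitization ℂ A) * (α y b : A)
    rw [map_mul, Unitization.inr_mul]
  · apply Subtype.ext; funext y
    simp only [lp.coeFn_star, Pi.star_apply]
    show ((α y (star a) : A) : Unitization ℂ A) = star ((α y a : A) : Unitization ℂ A)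
    rw [map_star, Unitization.inr_star]
  · apply Subtype.ext; funext y
    simp only [lp.infty_coeFn_mul, Pi.mul_apply]
    show f y • (1 : Unitization ℂ A) * (α y a : A) = ((α y a : A) : Unitization ℂ A) * (f y • 1)
    rw [smul_mul_assoc, one_mul, mul_smul_comm, mul_one]
  · rw [lp.infty_coeFn_mul, Pi.mul_apply]
    show (if x ≤ y then (1 : ℂ) else 0) • (1 : Unitization ℂ A) * (α y a : A) =
      ((if x ≤ y then α (y - x) (α x a) else 0 : A) : Unitization ℂ A)
    split_ifs with h
    · rw [one_smul, one_mul, ← hαadd, sub_add_cancel]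
    · simp
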